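/- Adaptive step-size guarantee: if the backtracking loop terminates with smoothness estimate M and step λ = min{λ_max, −g/(M‖d‖²)} where g := max_j ⟨∇f_j(x), d⟩ < 0, and the exit condition max_j (f_j(x + λd) − f_j(x)) < λ g + (λ²M/2)‖d‖² holds, then max_j (f_j(x + λd) − f_j(x)) ≤ −min{λ_max·|g|, g²/(M‖d‖²)} + (λ²M/2)‖d‖², and in particular f_j(x + λd) < f_j(x) for all j. -/

import Mathlib

open scoped RealInnerProductSpace

theorem adaptive_stepsize_guarantee {n m : ℕ} [NeZero m]
    (f : Fin m → EuclideanSpace ℝ (Fin n) → ℝ)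
    (gr : Fin m → EuclideanSpace ℝ (Fin n))
    (x d : EuclideanSpace ℝ (Fin n)) (hd : d ≠ 0)
    (gval : ℝ) (hgdef : gval = ⨆ j : Fin m, ⟪gr j, d⟫) (hgneg : gval < 0)
    (M : ℝ) (hM : 0 < M) (lammax : ℝ) (hlammax : 0 < lammax)
    (lam : ℝ) (hlam : lam = min lammax (-gval / (M * ‖d‖ ^ 2)))
    (hexit : (⨆ j : Fin m, (f j (x + lam • d) - f j x)) <
      lam * gval + lam ^ 2 * M / 2 * ‖d‖ ^ 2) :
    (⨆ j : Fin m, (f j (x + lam • d) - f j x)) ≤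
      -min (lammax * |gval|) (gval ^ 2 / (M * ‖d‖ ^ 2)) + lam ^ 2 * M / 2 * ‖d‖ ^ 2 ∧
      ∀ j, f j (x + lam • d) < f j x := by
  have hdnorm : (0:ℝ) < ‖d‖ := norm_pos_iff.mpr hd
  have hden : (0:ℝ) < M * ‖d‖ ^ 2 := by positivity
  have habs : |gval| = -gval := abs_of_neg hgneg
  have hkey : lam * gval = -min (lammax * |gval|) (gval ^ 2 / (M * ‖d‖ ^ 2)) := by
    rcases le_total lammax (-gval / (M * ‖d‖ ^ 2)) with h | h
    · have h1 : lam = lammax := by rw [hlam, min_eq_left h]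
      have h2 : lammax * |gval| ≤ gval ^ 2 / (M * ‖d‖ ^ 2) := by
        rw [habs, le_div_iff₀ hden]
        rw [le_div_iff₀ hden] at h
        nlinarith
      rw [h1, min_eq_left h2, habs]; ring
    · have h1 : lam = -gval / (M * ‖d‖ ^ 2) := by rw [hlam, min_eq_right h]
      have h2 : gval ^ 2 / (M * ‖d‖ ^ 2) ≤ lammax * |gval| := by
        rw [habs, div_le_iff₀ hden]
        rw [div_le_iff₀ hden] at h
        nlinarith
      rw [h1, min_eq_right h2]
      field_simp
  have hlampos : 0 < lam := by
    rw [hlam]; exact lt_min hlammax (div_pos (neg_pos.mpr hgneg) hden)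
  have hlam2 : lam ^ 2 * M / 2 * ‖d‖ ^ 2 ≤ lam * (-gval) / 2 := by
    have h : lam ≤ -gval / (M * ‖d‖ ^ 2) := hlam ▸ min_le_right _ _
    rw [le_div_iff₀ hden] at h
    nlinarith
  have hsupneg : (⨆ j : Fin m, (f j (x + lam • d) - f j x)) < 0 := by
    calc _ < lam * gval + lam ^ 2 * M / 2 * ‖d‖ ^ 2 := hexit
    _ ≤ lam * gval + lam * (-gval) / 2 := by linarith
    _ = lam * gval / 2 := by ring
    _ < 0 := by
        have := mul_pos hlampos (neg_pos.mpr hgneg)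
        nlinarith
  refine ⟨?_, fun j => ?_⟩
  · rw [← hkey]; exact hexit.le
  · have hle : f j (x + lam • d) - f j x ≤ ⨆ j : Fin m, (f j (x + lam • d) - f j x) :=
      le_ciSup (f := fun j => f j (x + lam • d) - f j x) (Set.Finite.bddAbove (Set.finite_range _)) j
    linarith [lt_of_le_of_lt hle hsupneg]
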